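/- (Narrow band error.) With the above notation, ∫_{-W}^{W} |(1/K) ρ_K(N,W;ξ) - (1/(2W)) | dξ ≤ 2/K + (1 - (1/K) ∑_{k=0}^{K-1} λ_k), using the pointwise bound ρ_K ≤ N and the identity λ_k = ∫_{-W}^{W} |U_k|^2. -/

import Mathlib

open Real Finset

/-- The Dirichlet kernel `D_N(x) = sin(Nπx)/sin(πx)`. -/
noncomputable def dirichletKernel (N : ℕ) (x : ℝ) : ℝ :=
  Real.sin (N * Real.pi * x) / Real.sin (Real.pi * x)

/-- `U` belongs to the space `P_N` of trigonometric polynomials spanned by the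
exponentials `e^{2πi((-N+1)/2 + j)x}`, `0 ≤ j ≤ N-1`. -/
def IsTrigPoly (N : ℕ) (U : ℝ → ℂ) : Prop :=
  ∃ c : Fin N → ℂ, ∀ x : ℝ,
    U x = ∑ j : Fin N,
      c j * Complex.exp (2 * Real.pi * Complex.I * ((-(N:ℂ) + 1)/2 + (j:ℕ)) * x)

/-- `U ∈ P_N` is an eigenfunction of the Toeplitz operator `H_W^N` with
eigenvalue `lam`, i.e. `∫_{-W}^{W} D_N(ξ-ξ') U(ξ') dξ' = lam · U(ξ)`. -/
def IsSlepianEigen (N : ℕ) (W : ℝ) (lam : ℝ) (U : ℝ → ℂ) : Prop :=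
  IsTrigPoly N U ∧
    ∀ x : ℝ, (∫ y in (-W)..W, (dirichletKernel N (x - y) : ℂ) * U y) = (lam : ℂ) * U x

/-- The family `U_0, …, U_{N-1}` is orthonormal in `L²(I)`, `I = [-1/2,1/2]`. -/
def IsOrthonormalOnI (N : ℕ) (U : ℕ → ℝ → ℂ) : Prop :=
  ∀ j k, j < N → k < N →
    (∫ x in (-(1:ℝ)/2)..(1/2), U j x * (starRingEnd ℂ) (U k x))
      = if j = k then 1 else 0

/-- **Narrow band error.** Inside the band,
`∫_{-W}^{W} |(1/K) ρ_K(N,W;ξ) - 1/(2W)| dξ ≤ 2/K + (1 - (1/K) ∑_{k<K} λ_k)`,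
using the pointwise bound `ρ_K ≤ N` and the identity `λ_k = ∫_{-W}^{W}|U_k|²`. -/
theorem narrow_band_error (N : ℕ) (hN : 2 ≤ N) (W : ℝ)
    (hW : W ∈ Set.Ioo (0:ℝ) (1/2)) (lam : ℕ → ℝ) (U : ℕ → ℝ → ℂ)
    (hEig : ∀ k, k < N → IsSlepianEigen N W (lam k) (U k))
    (hON : IsOrthonormalOnI N U)
    (hlam01 : ∀ k, k < N → 0 ≤ lam k ∧ lam k ≤ 1)
    (hband : ∀ k, k < N → lam k = ∫ x in (-W)..W, ‖U k x‖^2)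
    (hrho : ∀ ξ : ℝ, (∑ k ∈ Finset.range N, ‖U k ξ‖^2) ≤ N)
    (K : ℕ) (hK : K = ⌊2 * (N : ℝ) * W⌋₊) (hK1 : 1 ≤ K) :
    (∫ ξ in (-W)..W,
        |(1 / (K : ℝ)) * (∑ k ∈ Finset.range K, ‖U k ξ‖^2) - 1 / (2 * W)|)
      ≤ 2 / K + (1 - (1 / (K : ℝ)) * ∑ k ∈ Finset.range K, lam k) := by
  obtain ⟨hW0, hW2⟩ := hW
  have hKpos : (0:ℝ) < K := by exact_mod_cast hK1
  have hKN : K ≤ N := by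
    have hN0 : (0:ℝ) < N := by exact_mod_cast (by omega : 0 < N)
    have h1 : 2 * (N:ℝ) * W ≤ (N:ℝ) := by nlinarith
    calc K = ⌊2 * (N:ℝ) * W⌋₊ := hK
      _ ≤ ⌊(N:ℝ)⌋₊ := Nat.floor_le_floor h1
      _ = N := by simp
  have hcontU : ∀ k, k < K → Continuous (U k) := by
    intro k hk
    obtain ⟨c, hc⟩ := (hEig k (lt_of_lt_of_le hk hKN)).1
    have : U k = fun x : ℝ => ∑ j : Fin N,
        c j * Complex.exp (2 * Real.pi * Complex.I * ((-(N:ℂ) + 1)/2 + (j:ℕ)) * x) :=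
      funext hc
    rw [this]
    refine continuous_finset_sum _ fun j _ => Continuous.mul continuous_const ?_
    exact Complex.continuous_exp.comp (continuous_const.mul Complex.continuous_ofReal)
  set g : ℝ → ℝ := fun ξ => (1 / (K : ℝ)) * ∑ k ∈ Finset.range K, ‖U k ξ‖^2 with hg
  have hcontg : Continuous g := by
    refine continuous_const.mul (continuous_finset_sum _ fun k hk => ?_)
    exact ((hcontU k (Finset.mem_range.mp hk)).norm.pow 2)
  set c0 : ℝ := 1 / (2 * W) with hc0
  have hc0pos : 0 < c0 := by positivity
  have hg_nonneg : ∀ ξ, 0 ≤ g ξ := by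
    intro ξ
    have h : (0:ℝ) ≤ ∑ k ∈ Finset.range K, ‖U k ξ‖^2 :=
      Finset.sum_nonneg fun k _ => by positivity
    have : (0:ℝ) ≤ 1 / (K:ℝ) := by positivity
    exact mul_nonneg this h
  have hg_le : ∀ ξ, g ξ ≤ (N:ℝ) / K := by
    intro ξ
    have h1 : (∑ k ∈ Finset.range K, ‖U k ξ‖^2) ≤ ∑ k ∈ Finset.range N, ‖U k ξ‖^2 :=
      Finset.sum_le_sum_of_subset_of_nonneg (Finset.range_subset_range.mpr hKN)
        (fun k _ _ => by positivity)
    have h2 : (∑ k ∈ Finset.range K, ‖U k ξ‖^2) ≤ (N:ℝ) := h1.trans (hrho ξ)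
    have hinv : (0:ℝ) ≤ 1 / (K:ℝ) := by positivity
    calc g ξ ≤ (1 / (K:ℝ)) * (N:ℝ) := mul_le_mul_of_nonneg_left h2 hinv
      _ = (N:ℝ) / K := by ring
  have hfloor : 2 * (N:ℝ) * W < (K:ℝ) + 1 := by
    rw [hK]; exact_mod_cast Nat.lt_floor_add_one (2 * (N:ℝ) * W)
  have hbd : ∀ ξ, max (g ξ - c0) 0 ≤ 1 / (2 * W * K) := by
    intro ξ
    refine max_le ?_ (by positivity)
    have h1 : g ξ - c0 ≤ (N:ℝ)/K - 1/(2*W) := by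
      have := hg_le ξ; rw [hc0]; linarith
    have h2 : (N:ℝ)/K - 1/(2*W) ≤ 1 / (2 * W * K) := by
      rw [div_sub_div _ _ (ne_of_gt hKpos) (by positivity : (2*W:ℝ) ≠ 0),
        div_le_div_iff₀ (by positivity) (by positivity)]
      nlinarith [hfloor, mul_pos (mul_pos hW0 hKpos) hKpos, mul_pos hW0 hKpos]
    linarith
  have hint_g : IntervalIntegrable g MeasureTheory.volume (-W) W :=
    hcontg.intervalIntegrable _ _
  have hint_gc : IntervalIntegrable (fun ξ => g ξ - c0) MeasureTheory.volume (-W) W :=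
    hint_g.sub intervalIntegrable_const
  have hcont_max : Continuous (fun ξ => max (g ξ - c0) 0) :=
    (hcontg.sub continuous_const).max continuous_const
  have hint_max : IntervalIntegrable (fun ξ => max (g ξ - c0) 0) MeasureTheory.volume (-W) W :=
    hcont_max.intervalIntegrable _ _
  have hint_each : ∀ k ∈ Finset.range K,
      IntervalIntegrable (fun ξ => ‖U k ξ‖^2) MeasureTheory.volume (-W) W := by
    intro k hk
    exact ((hcontU k (Finset.mem_range.mp hk)).norm.pow 2).intervalIntegrable _ _
  have hSum : (∫ ξ in (-W)..W, ∑ k ∈ Finset.range K, ‖U k ξ‖^2)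
      = ∑ k ∈ Finset.range K, lam k := by
    rw [intervalIntegral.integral_finset_sum hint_each]
    exact Finset.sum_congr rfl fun k hk =>
      (hband k (lt_of_lt_of_le (Finset.mem_range.mp hk) hKN)).symm
  have hIg : (∫ ξ in (-W)..W, g ξ)
      = (1 / (K:ℝ)) * ∑ k ∈ Finset.range K, lam k := by
    rw [hg]
    rw [intervalIntegral.integral_const_mul, hSum]
  have habs : ∀ a : ℝ, |a| = 2 * max a 0 - a := by
    intro a
    rcases le_total a 0 with h | h
    · rw [abs_of_nonpos h, max_eq_right h]; ring
    · rw [abs_of_nonneg h, max_eq_left h]; ring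
  have hstep : (∫ ξ in (-W)..W, |g ξ - c0|)
      = 2 * (∫ ξ in (-W)..W, max (g ξ - c0) 0) - (∫ ξ in (-W)..W, (g ξ - c0)) := by
    rw [← intervalIntegral.integral_const_mul, ← intervalIntegral.integral_sub
      (hint_max.const_mul 2) hint_gc]
    exact intervalIntegral.integral_congr fun ξ _ => habs (g ξ - c0)
  have hImax : (∫ ξ in (-W)..W, max (g ξ - c0) 0) ≤ 1 / (K:ℝ) := by
    have h1 : (∫ ξ in (-W)..W, max (g ξ - c0) 0)
        ≤ ∫ _ in (-W)..W, 1 / (2 * W * K) := by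
      exact intervalIntegral.integral_mono_on (by linarith) hint_max
        intervalIntegrable_const (fun ξ _ => hbd ξ)
    rw [intervalIntegral.integral_const, smul_eq_mul] at h1
    have h2 : (W - -W) * (1 / (2 * W * K)) = 1 / (K:ℝ) := by
      have hKne : (K:ℝ) ≠ 0 := ne_of_gt hKpos
      have hWne : W ≠ 0 := ne_of_gt hW0
      field_simp
      norm_num
    linarith
  have hIgc : (∫ ξ in (-W)..W, (g ξ - c0))
      = (1 / (K:ℝ)) * (∑ k ∈ Finset.range K, lam k) - 1 := by
    rw [intervalIntegral.integral_sub hint_g intervalIntegrable_const,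
      intervalIntegral.integral_const, hIg, smul_eq_mul]
    have h2 : (W - -W) * c0 = 1 := by
      have hWne : W ≠ 0 := ne_of_gt hW0
      rw [hc0]; field_simp; ring
    rw [h2]
  have hgoal : (∫ ξ in (-W)..W, |g ξ - c0|)
      ≤ 2 / K + (1 - (1 / (K:ℝ)) * ∑ k ∈ Finset.range K, lam k) := by
    rw [hstep, hIgc]
    have h2K : (2:ℝ)/(K:ℝ) = 2 * (1/(K:ℝ)) := by ring
    rw [h2K]
    linarith [hImax]
  simpa [hg, hc0] using hgoal
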